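/- Let a, b, c be real numbers with a > -1, c > -1 and a + b + 2c + 2 = 0. Then the integral of sin(x)^a * cos(x)^b * cos(2x)^c over x from 0 to π/4 equals (1/2) * B((a+1)/2, c+1). -/

import Mathlib

open Real MeasureTheory intervalIntegral Set

lemma cpow_real_eq (x y : ℝ) (hx : 0 ≤ x) : (x:ℂ) ^ ((y:ℂ)) = ((x ^ y : ℝ) : ℂ) :=
  (Complex.ofReal_cpow hx y).symm

lemma beta_integrand_integrable {p q : ℝ} (hp : 0 < p) (hq : 0 < q) :
    IntegrableOn (fun x : ℝ => x ^ (p-1) * (1-x) ^ (q-1)) (Set.Ioo (0:ℝ) 1) := by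
  have hC : IntervalIntegrable (fun x : ℝ => (x:ℂ) ^ ((p:ℂ)-1) * ((1:ℂ)-x) ^ ((q:ℂ)-1))
      volume 0 1 := Complex.betaIntegral_convergent (by simpa using hp) (by simpa using hq)
  rw [intervalIntegrable_iff_integrableOn_Ioo_of_le zero_le_one] at hC
  apply MeasureTheory.IntegrableOn.congr_fun (hC.re) ?_ measurableSet_Ioo
  intro x hx
  simp only
  rw [show ((p:ℂ)-1) = ((p-1:ℝ):ℂ) by push_cast; ring,
      show ((q:ℂ)-1) = ((q-1:ℝ):ℂ) by push_cast; ring,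
      show ((1:ℂ) - x) = ((1 - x : ℝ) : ℂ) by push_cast; ring,
      cpow_real_eq _ _ hx.1.le, cpow_real_eq _ _ (by linarith [hx.2]),
      ← Complex.ofReal_mul]
  simp

lemma real_beta {p q : ℝ} (hp : 0 < p) (hq : 0 < q) :
    ∫ x in (0:ℝ)..1, x ^ (p-1) * (1-x) ^ (q-1) = Gamma p * Gamma q / Gamma (p+q) := by
  have key : Complex.Gamma p * Complex.Gamma q
      = Complex.Gamma ((p:ℂ)+q) * Complex.betaIntegral p q :=
    Complex.Gamma_mul_Gamma_eq_betaIntegral (by simpa using hp) (by simpa using hq)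
  have hbeta : Complex.betaIntegral p q
      = ((∫ x in (0:ℝ)..1, x ^ (p-1) * (1-x) ^ (q-1) : ℝ) : ℂ) := by
    rw [Complex.betaIntegral, ← intervalIntegral.integral_ofReal]
    apply intervalIntegral.integral_congr
    intro x hx
    rw [uIcc_of_le zero_le_one] at hx
    simp only
    rw [show ((p:ℂ)-1) = ((p-1:ℝ):ℂ) by push_cast; ring,
        show ((q:ℂ)-1) = ((q-1:ℝ):ℂ) by push_cast; ring,
        show ((1:ℂ) - x) = ((1 - x : ℝ) : ℂ) by push_cast; ring,
        cpow_real_eq _ _ hx.1, cpow_real_eq _ _ (by linarith [hx.2]),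
        ← Complex.ofReal_mul]
  rw [hbeta] at key
  have key2 : (Gamma p * Gamma q : ℝ)
      = Gamma (p+q) * ∫ x in (0:ℝ)..1, x ^ (p-1) * (1-x) ^ (q-1) := by
    rw [show ((p:ℂ)+q) = ((p+q:ℝ):ℂ) by push_cast; ring] at key
    rw [Complex.Gamma_ofReal, Complex.Gamma_ofReal, Complex.Gamma_ofReal] at key
    exact_mod_cast key
  have hG : Gamma (p+q) ≠ 0 := (Real.Gamma_pos_of_pos (by linarith)).ne'
  rw [key2]
  field_simp

theorem stmt13 (a b c : ℝ) (ha : -1 < a) (hc : -1 < c) (h : a + b + 2 * c + 2 = 0) :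
    ∫ x in (0:ℝ)..(π/4), (Real.sin x) ^ a * (Real.cos x) ^ b * (Real.cos (2 * x)) ^ c =
      (1/2) * (Real.Gamma ((a+1)/2) * Real.Gamma (c+1) / Real.Gamma ((a+1)/2 + (c+1))) := by
  have hpi : (0:ℝ) < π := pi_pos
  set f : ℝ → ℝ := fun x => tan x ^ 2 with hf
  set f' : ℝ → ℝ := fun x => 2 * tan x * (1 / cos x ^ 2) with hf'
  set g : ℝ → ℝ := fun t => t ^ ((a-1)/2) * (1-t) ^ c with hg
  -- basic facts on the interval
  have hmem : ∀ x ∈ Ioo (0:ℝ) (π/4),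
      0 < cos x ∧ 0 < sin x ∧ 0 < tan x ∧ tan x < 1 ∧ 0 < cos (2*x) := by
    intro x hx
    obtain ⟨hx0, hx1⟩ := hx
    have hco : 0 < cos x := cos_pos_of_mem_Ioo ⟨by linarith, by linarith⟩
    have hsi : 0 < sin x := sin_pos_of_pos_of_lt_pi hx0 (by linarith)
    have ht : 0 < tan x := tan_pos_of_pos_of_lt_pi_div_two hx0 (by linarith)
    have ht1 : tan x < 1 := by
      have := tan_lt_tan_of_nonneg_of_lt_pi_div_two hx0.le (by linarith) hx1
      rwa [tan_pi_div_four] at this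
    have hc2 : 0 < cos (2*x) := cos_pos_of_mem_Ioo ⟨by linarith, by linarith⟩
    exact ⟨hco, hsi, ht, ht1, hc2⟩
  have hderiv : ∀ x ∈ Ioo (0:ℝ) (π/4), HasDerivWithinAt f (f' x) (Ioo (0:ℝ) (π/4)) x := by
    intro x hx
    obtain ⟨hco, -, -, -, -⟩ := hmem x hx
    have := ((Real.hasDerivAt_tan hco.ne').fun_pow 2).hasDerivWithinAt
      (s := Ioo (0:ℝ) (π/4))
    refine this.congr_deriv ?_
    simp [hf']
  have hmono : StrictMonoOn f (Ioo (0:ℝ) (π/4)) := by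
    intro x hx y hy hxy
    obtain ⟨-, -, htx, -, -⟩ := hmem x hx
    obtain ⟨-, -, hty, -, -⟩ := hmem y hy
    have : tan x < tan y :=
      tan_lt_tan_of_nonneg_of_lt_pi_div_two hx.1.le (by linarith [hy.2]) hxy
    exact pow_lt_pow_left₀ this htx.le two_ne_zero
  have hinj : InjOn f (Ioo (0:ℝ) (π/4)) := hmono.injOn
  have himg : f '' Ioo (0:ℝ) (π/4) = Ioo (0:ℝ) 1 := by
    apply Subset.antisymm
    · rintro t ⟨x, hx, rfl⟩
      obtain ⟨-, -, htx, ht1, -⟩ := hmem x hx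
      refine ⟨by positivity, ?_⟩
      show tan x ^ 2 < 1
      nlinarith
    · have hcont : ContinuousOn f (Icc (0:ℝ) (π/4)) := by
        apply ContinuousOn.pow
        apply Real.continuousOn_tan.mono
        intro x hx
        have : 0 < cos x := cos_pos_of_mem_Ioo ⟨by linarith [hx.1], by linarith [hx.2]⟩
        exact this.ne'
      have := intermediate_value_Ioo (by linarith : (0:ℝ) ≤ π/4) hcont
      simpa [hf, Real.tan_pi_div_four] using this
  have hchg := MeasureTheory.integral_image_eq_integral_abs_deriv_smul
    measurableSet_Ioo hderiv hinj g
  rw [himg] at hchg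
  -- pointwise identity on the interval
  have key : ∀ x ∈ Ioo (0:ℝ) (π/4),
      |f' x| • g (f x) = 2 * (sin x ^ a * cos x ^ b * cos (2*x) ^ c) := by
    intro x hx
    obtain ⟨hco, hsi, ht, ht1, hc2⟩ := hmem x hx
    have habs : |f' x| = 2 * tan x * (1 / cos x ^ 2) := abs_of_pos (by positivity)
    have hpow : ∀ y : ℝ, 0 ≤ y → ∀ r : ℝ, (y ^ 2 : ℝ) ^ r = y ^ (2*r) := by
      intro y hy r
      rw [← Real.rpow_natCast y 2, ← Real.rpow_mul hy]
      norm_num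
    have h1 : (tan x ^ 2 : ℝ) ^ ((a-1)/2) = tan x ^ (a-1) := by
      rw [hpow _ ht.le]; ring_nf
    have h2 : 1 - tan x ^ 2 = cos (2*x) / cos x ^ 2 := by
      rw [tan_eq_sin_div_cos, div_pow, cos_two_mul]
      have hs := sin_sq_add_cos_sq x
      field_simp
      linarith
    have h3 : (1 - tan x ^ 2 : ℝ) ^ c = cos (2*x) ^ c * cos x ^ (-(2*c)) := by
      rw [h2, Real.div_rpow hc2.le (by positivity), div_eq_mul_inv,
        ← Real.rpow_neg (by positivity), hpow _ hco.le]
      ring_nf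
    have h4 : tan x ^ (a-1) * tan x = tan x ^ a := by
      nth_rewrite 2 [← Real.rpow_one (tan x)]
      rw [← Real.rpow_add ht]; ring_nf
    have h5 : tan x ^ a = sin x ^ a * cos x ^ (-a) := by
      rw [tan_eq_sin_div_cos, Real.div_rpow hsi.le hco.le, div_eq_mul_inv,
        ← Real.rpow_neg hco.le]
    have h6 : (1 / cos x ^ 2 : ℝ) = cos x ^ (-2 : ℝ) := by
      rw [one_div, ← Real.rpow_neg_one, hpow _ hco.le]
      norm_num
    have hb : b = -a + -2 + -(2*c) := by linarith
    have lt : Real.log (tan x) = Real.log (sin x) - Real.log (cos x) := by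
      rw [tan_eq_sin_div_cos, Real.log_div hsi.ne' hco.ne']
    have htexp : tan x = Real.exp (Real.log (sin x) - Real.log (cos x)) := by
      rw [Real.exp_sub, Real.exp_log hsi, Real.exp_log hco, tan_eq_sin_div_cos]
    have hme : ∀ u v : ℝ, Real.exp u * Real.exp v = Real.exp (u + v) :=
      fun u v => (Real.exp_add u v).symm
    rw [smul_eq_mul, habs, hg, hf]
    simp only
    rw [h1, h3, h6, hb]
    simp only [Real.rpow_def_of_pos ht, Real.rpow_def_of_pos hsi, Real.rpow_def_of_pos hco,
      Real.rpow_def_of_pos hc2, lt]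
    rw [htexp]
    simp only [mul_assoc, hme]
    rw [mul_right_inj' (two_ne_zero : (2:ℝ) ≠ 0), Real.exp_eq_exp]
    ring
  -- assemble
  have hp : 0 < (a+1)/2 := by linarith
  have hq : 0 < c+1 := by linarith
  have hLHS : ∫ t in Ioo (0:ℝ) 1, g t
      = Gamma ((a+1)/2) * Gamma (c+1) / Gamma ((a+1)/2 + (c+1)) := by
    have := real_beta hp hq
    rw [intervalIntegral.integral_of_le zero_le_one,
      MeasureTheory.integral_Ioc_eq_integral_Ioo,
      show (a+1)/2 - 1 = (a-1)/2 by ring, show c+1-1 = c by ring] at this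
    exact this
  have hRHS : ∫ x in Ioo (0:ℝ) (π/4), |f' x| • g (f x)
      = 2 * ∫ x in (0:ℝ)..(π/4), sin x ^ a * cos x ^ b * cos (2*x) ^ c := by
    rw [MeasureTheory.setIntegral_congr_fun measurableSet_Ioo key,
      MeasureTheory.integral_const_mul,
      intervalIntegral.integral_of_le (by linarith : (0:ℝ) ≤ π/4),
      MeasureTheory.integral_Ioc_eq_integral_Ioo]
  rw [hLHS, hRHS] at hchg
  linarith
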